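/- Let R be a commutative ring with a translation-invariant partial order on its additive group. Assume R is archimedean (if kg + h ∈ R⁺ for all k ∈ ℕ then g ∈ R⁺) and localizable. Then every positive natural number n (viewed as n·1 ∈ R) is a localizable element of R: if nr ∈ R⁺ for some r ∈ R, then r ∈ R⁺. -/

import Mathlib

/-- In an archimedean localizable ring with translation-invariant partial order,
every positive natural number is a localizable element. -/
theorem stmt_2 (R : Type*) [CommRing R] [PartialOrder R]
    [CovariantClass R R (· + ·) (· ≤ ·)]
    (harch : ∀ g h : R, (∀ k : ℕ, 1 ≤ k → 0 ≤ (k : R) * g + h) → 0 ≤ g)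
    (hloc : ∀ r : R, ∃ s : R, (∃ t : R, 0 ≤ t ∧ s = 1 + t) ∧
      (∀ r' : R, 0 ≤ r' * s → 0 ≤ r') ∧ -s ≤ r ∧ r ≤ s) :
    ∀ n : ℕ, 1 ≤ n → ∀ r : R, 0 ≤ (n : R) * r → 0 ≤ r := by
  have addnn : ∀ a b : R, 0 ≤ a → 0 ≤ b → 0 ≤ a + b := by
    intro a b ha hb
    calc (0:R) ≤ a := ha
    _ = a + 0 := (add_zero a).symm
    _ ≤ a + b := add_le_add_right hb a
  -- First, 0 ≤ 1
  obtain ⟨s₀, ⟨t₀, ht₀, hs₀⟩, hloc₀, hl₀, hr₀⟩ := hloc 0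
  have h1 : (0:R) ≤ 1 := hloc₀ 1 (by simpa using hr₀)
  have hmul : ∀ (m : ℕ) (x : R), 0 ≤ x → 0 ≤ (m:R) * x := by
    intro m x hx
    induction m with
    | zero => simp
    | succ m ih =>
      push_cast
      rw [add_mul, one_mul]
      exact addnn _ _ ih hx
  intro n hn r hnr
  obtain ⟨s, ⟨t, ht, hst⟩, hlocs, hls, hrs⟩ := hloc r
  have hs : (0:R) ≤ s := hst ▸ addnn _ _ h1 ht
  have hrsum : (0:R) ≤ r + s := by
    calc (0:R) = s + -s := by ring
    _ ≤ s + r := add_le_add_right hls s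
    _ = r + s := by ring
  refine harch r ((n:R) * s) ?_
  intro k hk
  have h1' : n * (k / n) + k % n = k := Nat.div_add_mod k n
  have h2' : (k % n) + (n - k % n) = n :=
    Nat.add_sub_cancel' (le_of_lt (Nat.mod_lt k (by omega)))
  have hc1 : (k:R) = (n:R) * ((k / n : ℕ):R) + ((k % n : ℕ):R) := by
    exact_mod_cast congrArg (Nat.cast : ℕ → R) h1'.symm
  have hc2 : (n:R) = ((k % n : ℕ):R) + ((n - k % n : ℕ):R) := by
    exact_mod_cast congrArg (Nat.cast : ℕ → R) h2'.symm
  have hdecomp : (k:R) * r + (n:R) * s =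
      ((k / n : ℕ):R) * ((n:R) * r) + ((k % n : ℕ):R) * (r + s)
        + ((n - k % n : ℕ):R) * s := by
    rw [hc1, hc2]; ring
  rw [hdecomp]
  exact addnn _ _ (addnn _ _ (hmul _ _ hnr) (hmul _ _ hrsum)) (hmul _ _ hs)
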